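/- arXiv:2507.04102 — 3 statements merged into one kernel-verified Lean document; each statement's English description precedes it below -/
import Mathlib

section
/- Let D ≥ 2. There exist constants 0 < c ≤ C depending only on D such that for all j ∈ ℕ, ε > 0, and y ∈ ℝ^{D−1}: c · 2^{j(D+1)ε/2} ≤ ∫_{ℝ^D} |ξ₀| |𝓕(χ̃^{j,ε}_y)(ξ₀)| dξ₀ ≤ C · 2^{j(D+1)ε/2}, where |ξ₀| denotes the Euclidean norm on ℝ^D. -/
open MeasureTheory

/-- The Gaussian window `χ̃^{j,ε}_y` on `ℝ^D ≅ ℝ × ℝ^{D-1}` (here `D = d + 1`, the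
coordinate `x 0` playing the role of `x_0` and `x k.succ` that of `x_k`). -/
noncomputable def chiTilde (d j : ℕ) (ε : ℝ) (y : EuclideanSpace ℝ (Fin d))
    (x : EuclideanSpace ℝ (Fin (d + 1))) : ℝ :=
  Real.pi ^ (-((d : ℝ) + 1) / 4) * Real.exp (-(x 0) ^ 2 / 2) *
    (2 : ℝ) ^ (ε * (j : ℝ) * (d : ℝ) / 2) *
    ∏ k : Fin d, Real.exp (-(2 : ℝ) ^ (2 * ε * (j : ℝ)) * (x k.succ - y k) ^ 2 / 2)

open Real Complex FourierTransform
open scoped Real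

noncomputable def myB (d : ℕ) (M : ℝ) : Fin (d + 1) → ℝ := fun i => if i = 0 then 1 else M

lemma myAbsGauss {a : ℝ} (ha : 0 < a) : ∫ t : ℝ, |t| * Real.exp (-a * t ^ 2) = a⁻¹ := by
  have h1 : (fun t : ℝ => |t| * Real.exp (-a * t ^ 2))
      = fun t : ℝ => |t| * Real.exp (-a * |t| ^ 2) := by
    funext t; rw [_root_.sq_abs]
  rw [h1, integral_comp_abs (f := fun t => t * Real.exp (-a * t ^ 2))]
  have h2 : ∫ x : ℝ in Set.Ioi 0, x * Real.exp (-a * x ^ 2) = (2 * a)⁻¹ := by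
    have h0 := integral_mul_cexp_neg_mul_sq (b := (a : ℂ)) (by simpa using ha)
    have h3 : (fun r : ℝ => (r : ℂ) * Complex.exp (-(a : ℂ) * (r : ℂ) ^ 2))
        = fun r : ℝ => (RCLike.ofReal (K := ℂ) (r * Real.exp (-a * r ^ 2))) := by
      funext r
      rw [show (RCLike.ofReal (K := ℂ) (r * Real.exp (-a * r ^ 2)))
          = ((r * Real.exp (-a * r ^ 2) : ℝ) : ℂ) from rfl]
      push_cast [Complex.ofReal_exp]; ring_nf
    rw [h3, integral_ofReal (𝕜 := ℂ)] at h0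
    have h4 : (((2 * a)⁻¹ : ℝ) : ℂ) = (2 * (a : ℂ))⁻¹ := by push_cast; ring
    rw [show ((2 * (a:ℂ))⁻¹) = (RCLike.ofReal (K := ℂ) ((2*a)⁻¹)) from by
      rw [show (RCLike.ofReal (K := ℂ) ((2*a)⁻¹)) = (((2*a)⁻¹ : ℝ) : ℂ) from rfl, h4]] at h0
    exact RCLike.ofReal_injective h0
  rw [h2]; field_simp

lemma myOneD {a : ℝ} (ha : 0 < a) (yk w : ℝ) :
    ‖∫ t : ℝ, Complex.exp ((-2 * π * (t * w) : ℝ) * Complex.I)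
        * ((Real.exp (-(a * (t - yk) ^ 2 / 2)) : ℝ) : ℂ)‖
      = Real.sqrt (2 * π / a) * Real.exp (-(2 * π ^ 2 / a) * w ^ 2) := by
  have ha' : a ≠ 0 := ha.ne'
  have hb : (-(a / 2) : ℂ).re < 0 := by simpa using by positivity
  have h1 : (fun t : ℝ => Complex.exp ((-2 * π * (t * w) : ℝ) * Complex.I)
        * ((Real.exp (-(a * (t - yk) ^ 2 / 2)) : ℝ) : ℂ))
      = fun t : ℝ => Complex.exp ((-(a/2) : ℂ) * (t:ℂ) ^ 2
          + (((a * yk : ℝ) : ℂ) - ((2 * π * w : ℝ) : ℂ) * Complex.I) * (t:ℂ)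
          + (((-(a * yk ^ 2 / 2) : ℝ) : ℂ))) := by
    funext t
    rw [Complex.ofReal_exp, ← Complex.exp_add]
    congr 1
    push_cast
    ring
  rw [h1, integral_cexp_quadratic hb]
  rw [norm_mul]
  have h2 : ‖((π : ℂ) / -(-((a:ℂ)/2))) ^ (1/2 : ℂ)‖ = Real.sqrt (2 * π / a) := by
    have h2' : ((π : ℂ) / -(-((a:ℂ)/2))) = ((2 * π / a : ℝ) : ℂ) := by
      push_cast; field_simp
    rw [h2', Complex.norm_cpow_eq_rpow_re_of_pos (by positivity)]
    rw [Real.sqrt_eq_rpow]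
    norm_num
  rw [h2]
  congr 1
  rw [Complex.norm_exp]
  congr 1
  have h4 : (((a * yk : ℝ) : ℂ) - ((2 * π * w : ℝ) : ℂ) * Complex.I) ^ 2
      = (((a * yk) ^ 2 - (2 * π * w) ^ 2 : ℝ) : ℂ)
        - ((2 * (a * yk) * (2 * π * w) : ℝ) : ℂ) * Complex.I := by
    push_cast
    ring_nf
    rw [Complex.I_sq]
    ring
  rw [h4, show (4 : ℂ) * -((a:ℂ)/2) = ((-(2*a) : ℝ) : ℂ) from by push_cast; ring]
  simp only [Complex.sub_re, Complex.div_ofReal_re, Complex.ofReal_re, Complex.mul_re,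
    Complex.I_re, Complex.I_im, Complex.ofReal_im, mul_zero, zero_mul, mul_one, sub_zero,
    zero_sub]
  field_simp
  ring

lemma myFTnorm (d j : ℕ) (ε : ℝ) (y : EuclideanSpace ℝ (Fin d))
    (ξ : EuclideanSpace ℝ (Fin (d + 1))) (hM : 0 < (2:ℝ) ^ (2 * ε * (j:ℝ))) :
    ‖VectorFourier.fourierIntegral Real.fourierChar volume
                (innerₗ (EuclideanSpace ℝ (Fin (d + 1)))) (fun x => (chiTilde d j ε y x : ℂ)) ξ‖
      = Real.pi ^ (-((d:ℝ)+1)/4) * (2:ℝ) ^ (ε * (j:ℝ) * (d:ℝ) / 2) *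
        ∏ i : Fin (d+1),
          (Real.sqrt (2*π / myB d ((2:ℝ) ^ (2 * ε * (j:ℝ))) i)
            * Real.exp (-(2*π^2 / myB d ((2:ℝ) ^ (2 * ε * (j:ℝ))) i) * (ξ i)^2)) := by
  set M : ℝ := (2:ℝ) ^ (2 * ε * (j:ℝ)) with hMdef
  set B : Fin (d+1) → ℝ := myB d M with hBdef
  have hB : ∀ i, 0 < B i := by
    intro i; by_cases h : i = 0 <;> simp [hBdef, myB, h, hM]
  set Y : Fin (d+1) → ℝ := Fin.cons 0 (fun k => y k) with hYdef
  set C₀ : ℝ := Real.pi ^ (-((d:ℝ)+1)/4) * (2:ℝ) ^ (ε * (j:ℝ) * (d:ℝ) / 2) with hC₀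
  set H : Fin (d+1) → ℝ → ℂ := fun i t =>
    Complex.exp ((-2 * π * (t * ξ i) : ℝ) * Complex.I)
      * ((Real.exp (-(B i * (t - Y i) ^ 2 / 2)) : ℝ) : ℂ) with hHdef
  have hpt : ∀ v : EuclideanSpace ℝ (Fin (d+1)),
      Complex.exp (((-2 * π * inner ℝ v ξ : ℝ)) * Complex.I) • ((chiTilde d j ε y v : ℝ) : ℂ)
        = (C₀ : ℂ) * ∏ i : Fin (d+1), H i (v i) := by
    intro v
    have hsum : (((-2 * π * inner ℝ v ξ : ℝ)) : ℂ) * Complex.I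
        = ∑ i : Fin (d+1), (((-2 * π * (v i * ξ i) : ℝ)) : ℂ) * Complex.I := by
      rw [show (inner ℝ v ξ : ℝ) = ∑ i, v i * ξ i from by
        simp [PiLp.inner_apply, RCLike.inner_apply, conj_trivial, mul_comm]]
      push_cast [Finset.mul_sum, Finset.sum_mul]
      try exact Finset.sum_congr rfl fun i _ => by ring
    have hreal : chiTilde d j ε y v
        = C₀ * ∏ i : Fin (d+1), Real.exp (-(B i * (v i - Y i) ^ 2 / 2)) := by
      rw [Fin.prod_univ_succ]
      simp only [hBdef, myB, hYdef, Fin.cons_zero, Fin.cons_succ, if_pos, Fin.succ_ne_zero,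
        if_neg, ne_eq, not_false_iff, ite_true, ite_false, one_mul, sub_zero]
      unfold chiTilde
      rw [hC₀, hMdef]
      simp only [neg_mul, neg_div]
      ring
    rw [smul_eq_mul, hsum, Complex.exp_sum, hHdef]
    simp only []
    rw [Finset.prod_mul_distrib, hreal]
    push_cast [Complex.ofReal_prod, Complex.ofReal_exp]
    ring
  rw [Real.vector_fourierIntegral_eq_integral_exp_smul]
  simp only [innerₗ_apply_apply]
  simp_rw [hpt]
  rw [MeasureTheory.integral_const_mul]
  rw [← ((EuclideanSpace.volume_preserving_symm_measurableEquiv_toLp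
      (Fin (d+1))).symm).integral_comp (MeasurableEquiv.measurableEmbedding _)]
  simp only [MeasurableEquiv.symm_symm, MeasurableEquiv.coe_toLp,
    PiLp.toLp_apply]
  rw [MeasureTheory.volume_pi, MeasureTheory.integral_fintype_prod_eq_prod (fun i (t : ℝ) => H i t)]
  rw [norm_mul, norm_prod]
  have hC₀pos : 0 < C₀ := by rw [hC₀]; positivity
  rw [Complex.norm_real, Real.norm_eq_abs, abs_of_pos hC₀pos]
  rw [hC₀]
  congr 1
  refine Finset.prod_congr rfl fun i _ => ?_
  rw [hHdef]
  simpa using myOneD (hB i) (Y i) (ξ i)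

lemma myProdLint (n : ℕ) (g : Fin n → ℝ → ℝ) (hi : ∀ i, Integrable (g i))
    (h0 : ∀ i t, 0 ≤ g i t) :
    ∫⁻ ξ : EuclideanSpace ℝ (Fin n), ENNReal.ofReal (∏ i, g i (ξ i))
      = ENNReal.ofReal (∏ i, ∫ t, g i t) := by
  have hco : ((fun ξ : EuclideanSpace ℝ (Fin n) => ∏ i, g i (ξ i)) ∘
      (MeasurableEquiv.toLp 2 (Fin n → ℝ)).symm.symm) = fun x : Fin n → ℝ => ∏ i, g i (x i) := by
    funext x
    simp [MeasurableEquiv.symm_symm, MeasurableEquiv.coe_toLp, Function.comp]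
  have hInt : Integrable (fun ξ : EuclideanSpace ℝ (Fin n) => ∏ i, g i (ξ i)) := by
    rw [← MeasurePreserving.integrable_comp_emb
      (EuclideanSpace.volume_preserving_symm_measurableEquiv_toLp (Fin n)).symm
      (MeasurableEquiv.measurableEmbedding _), hco]
    exact Integrable.fintype_prod (f := fun i (t : ℝ) => g i t) hi
  rw [← MeasureTheory.ofReal_integral_eq_lintegral_ofReal hInt
    (Filter.Eventually.of_forall fun ξ => Finset.prod_nonneg fun i _ => h0 i _)]
  congr 1
  rw [← ((EuclideanSpace.volume_preserving_symm_measurableEquiv_toLp (Fin n)).symm).integral_comp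
    (MeasurableEquiv.measurableEmbedding _)]
  simp only [MeasurableEquiv.symm_symm, MeasurableEquiv.coe_toLp,
    PiLp.toLp_apply]
  exact MeasureTheory.integral_fintype_prod_eq_prod g

/-- Two-sided bound
`∫_{ℝ^D} |ξ₀| |𝓕(χ̃^{j,ε}_y)(ξ₀)| dξ₀ ∼ 2^{j(D+1)ε/2}`, with constants depending only
on `D = d + 1`. -/
theorem stmt6 (d : ℕ) (hd : 1 ≤ d) :
    ∃ c C : ℝ, 0 < c ∧ c ≤ C ∧
      ∀ (j : ℕ) (ε : ℝ), 0 < ε → ∀ y : EuclideanSpace ℝ (Fin d),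
        ENNReal.ofReal (c * (2 : ℝ) ^ ((j : ℝ) * ((d : ℝ) + 2) * ε / 2)) ≤
          (∫⁻ ξ : EuclideanSpace ℝ (Fin (d + 1)),
            ENNReal.ofReal
              (‖ξ‖ * ‖VectorFourier.fourierIntegral Real.fourierChar volume
                (innerₗ (EuclideanSpace ℝ (Fin (d + 1)))) (fun x => (chiTilde d j ε y x : ℂ)) ξ‖)) ∧
        (∫⁻ ξ : EuclideanSpace ℝ (Fin (d + 1)),
            ENNReal.ofReal
              (‖ξ‖ * ‖VectorFourier.fourierIntegral Real.fourierChar volume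
                (innerₗ (EuclideanSpace ℝ (Fin (d + 1)))) (fun x => (chiTilde d j ε y x : ℂ)) ξ‖)) ≤
          ENNReal.ofReal (C * (2 : ℝ) ^ ((j : ℝ) * ((d : ℝ) + 2) * ε / 2)) := by
  have hπ : (0:ℝ) < π := Real.pi_pos
  set c : ℝ := Real.pi ^ (-((d:ℝ)+1)/4) * Real.sqrt (2*π) / (2*π^2) with hc
  have hcpos : 0 < c := by rw [hc]; positivity
  refine ⟨c, ((d:ℝ)+1) * c, hcpos, le_mul_of_one_le_left hcpos.le (by
    have : (0:ℝ) ≤ (d:ℝ) := Nat.cast_nonneg d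
    linarith), ?_⟩
  intro j ε hε y
  set M : ℝ := (2:ℝ) ^ (2 * ε * (j:ℝ)) with hMdef
  have hM : 0 < M := Real.rpow_pos_of_pos (by norm_num) _
  have hM1 : 1 ≤ M := Real.one_le_rpow (by norm_num) (by positivity)
  have hL : Real.sqrt M = (2:ℝ) ^ (ε * (j:ℝ)) := by
    rw [show M = ((2:ℝ) ^ (ε * (j:ℝ)))^2 from by
      rw [hMdef, ← Real.rpow_natCast ((2:ℝ) ^ (ε * (j:ℝ))) 2, ← Real.rpow_mul (by norm_num)]
      congr 1
      push_cast
      ring]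
    exact Real.sqrt_sq (by positivity)
  set B : Fin (d+1) → ℝ := myB d M with hBdef
  have hB : ∀ i, 0 < B i := by
    intro i; by_cases h : i = 0 <;> simp [hBdef, myB, h, hM]
  have hBle : ∀ i, B i ≤ M := by
    intro i; by_cases h : i = 0 <;> simp [hBdef, myB, h, hM1]
  set C₀ : ℝ := Real.pi ^ (-((d:ℝ)+1)/4) * (2:ℝ) ^ (ε * (j:ℝ) * (d:ℝ) / 2) with hC₀
  have hC₀pos : 0 < C₀ := by rw [hC₀]; positivity
  have hnorm : ∀ ξ : EuclideanSpace ℝ (Fin (d+1)),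
      ‖VectorFourier.fourierIntegral Real.fourierChar volume
                (innerₗ (EuclideanSpace ℝ (Fin (d + 1)))) (fun x => (chiTilde d j ε y x : ℂ)) ξ‖
        = C₀ * ∏ i : Fin (d+1),
            (Real.sqrt (2*π / B i) * Real.exp (-(2*π^2 / B i) * (ξ i)^2)) := by
    intro ξ; exact myFTnorm d j ε y ξ hM
  -- the coordinate-weight functions
  set g : Fin (d+1) → Fin (d+1) → ℝ → ℝ := fun m i t =>
    (if i = m then |t| else 1) * (Real.sqrt (2*π / B i) * Real.exp (-(2*π^2 / B i) * t^2))
    with hg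
  have hg0 : ∀ m i t, 0 ≤ g m i t := by
    intro m i t
    simp only [hg]
    have h2 : (0:ℝ) ≤ if i = m then |t| else 1 := by
      by_cases h : i = m <;> simp [h, abs_nonneg]
    exact mul_nonneg h2 (by positivity)
  have hgInt : ∀ m i, Integrable (g m i) := by
    intro m i
    have ha : (0:ℝ) < 2*π^2 / B i := div_pos (by positivity) (hB i)
    by_cases h : i = m
    · have h1 : Integrable (fun t : ℝ => |t| * Real.exp (-(2*π^2 / B i) * t^2)) := by
        refine ((integrable_mul_exp_neg_mul_sq ha).abs).congr
          (Filter.Eventually.of_forall fun t => ?_)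
        simp only [abs_mul, Real.abs_exp]
      refine (h1.const_mul (Real.sqrt (2*π / B i))).congr
        (Filter.Eventually.of_forall fun t => ?_)
      simp only [hg]; rw [if_pos h]; ring
    · refine ((integrable_exp_neg_mul_sq ha).const_mul (Real.sqrt (2*π / B i))).congr
        (Filter.Eventually.of_forall fun t => ?_)
      simp only [hg]; rw [if_neg h]; ring
  have hgval : ∀ m i, (∫ t, g m i t)
      = if i = m then Real.sqrt (2*π) * Real.sqrt (B i) / (2*π^2) else 1 := by
    intro m i
    have hBi := hB i
    have ha : (0:ℝ) < 2*π^2 / B i := div_pos (by positivity) hBi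
    by_cases h : i = m
    · rw [if_pos h]
      have : (fun t : ℝ => g m i t)
          = fun t : ℝ => Real.sqrt (2*π / B i) * (|t| * Real.exp (-(2*π^2 / B i) * t^2)) := by
        funext t; simp only [hg]; rw [if_pos h]; ring
      rw [this, MeasureTheory.integral_const_mul, myAbsGauss ha]
      rw [show (2*π^2 / B i)⁻¹ = B i / (2*π^2) from by field_simp]
      rw [Real.sqrt_div (by positivity : (0:ℝ) ≤ 2*π)]
      have hsb : 0 < Real.sqrt (B i) := Real.sqrt_pos.mpr hBi
      field_simp
      linear_combination (-1 : ℝ) *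
        Real.sq_sqrt hBi.le
    · rw [if_neg h]
      have : (fun t : ℝ => g m i t)
          = fun t : ℝ => Real.sqrt (2*π / B i) * Real.exp (-(2*π^2 / B i) * t^2) := by
        funext t; simp only [hg]; rw [if_neg h]; ring
      rw [this, MeasureTheory.integral_const_mul, integral_gaussian]
      rw [← Real.sqrt_mul (by positivity : (0:ℝ) ≤ 2*π / B i)]
      rw [show (2*π / B i) * (π / (2*π^2 / B i)) = 1 from by field_simp]
      exact Real.sqrt_one
  -- pointwise product form of |ξ m| * ‖𝓕‖
  have hptm : ∀ (m : Fin (d+1)) (ξ : EuclideanSpace ℝ (Fin (d+1))),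
      |ξ m| * ‖VectorFourier.fourierIntegral Real.fourierChar volume
                (innerₗ (EuclideanSpace ℝ (Fin (d + 1)))) (fun x => (chiTilde d j ε y x : ℂ)) ξ‖
        = C₀ * ∏ i : Fin (d+1), g m i (ξ i) := by
    intro m ξ
    have hsplit : ∏ i : Fin (d+1), g m i (ξ i)
        = |ξ m| * ∏ i : Fin (d+1),
            (Real.sqrt (2*π / B i) * Real.exp (-(2*π^2 / B i) * (ξ i)^2)) := by
      simp only [hg]
      rw [Finset.prod_mul_distrib, Finset.prod_ite_eq' Finset.univ m (fun i => |ξ i|),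
        if_pos (Finset.mem_univ m)]
    rw [hnorm ξ, hsplit]
    ring
  -- the key computation of each term
  have key : ∀ m : Fin (d+1),
      (∫⁻ ξ : EuclideanSpace ℝ (Fin (d+1)), ENNReal.ofReal
        (|ξ m| * ‖VectorFourier.fourierIntegral Real.fourierChar volume
                (innerₗ (EuclideanSpace ℝ (Fin (d + 1)))) (fun x => (chiTilde d j ε y x : ℂ)) ξ‖))
      = ENNReal.ofReal (c * ((2:ℝ) ^ (ε * (j:ℝ) * (d:ℝ) / 2) * Real.sqrt (B m))) := by
    intro m
    simp only [hptm]
    simp only [ENNReal.ofReal_mul hC₀pos.le]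
    rw [lintegral_const_mul' _ _ ENNReal.ofReal_ne_top]
    rw [myProdLint (d+1) (g m) (hgInt m) (hg0 m)]
    simp only [hgval]
    rw [Finset.prod_ite_eq' Finset.univ m
      (fun i => Real.sqrt (2*π) * Real.sqrt (B i) / (2*π^2)), if_pos (Finset.mem_univ m)]
    rw [← ENNReal.ofReal_mul hC₀pos.le]
    congr 1
    rw [hC₀, hc]
    ring
  have hcoord : ∀ (m : Fin (d+1)) (ξ : EuclideanSpace ℝ (Fin (d+1))), |ξ m| ≤ ‖ξ‖ := by
    intro m ξ
    rw [EuclideanSpace.norm_eq, ← Real.sqrt_sq_eq_abs]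
    apply Real.sqrt_le_sqrt
    have := Finset.single_le_sum (f := fun i => ‖ξ i‖^2)
      (fun i _ => by positivity) (Finset.mem_univ m)
    simpa [Real.norm_eq_abs, _root_.sq_abs] using this
  have hnormle : ∀ ξ : EuclideanSpace ℝ (Fin (d+1)), ‖ξ‖ ≤ ∑ m : Fin (d+1), |ξ m| := by
    intro ξ
    rw [EuclideanSpace.norm_eq]
    have h1 : ∑ i : Fin (d+1), ‖ξ i‖^2 ≤ (∑ i : Fin (d+1), |ξ i|)^2 := by
      simpa [Real.norm_eq_abs] using
        Finset.sum_sq_le_sq_sum_of_nonneg (s := Finset.univ)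
          (f := fun i : Fin (d+1) => |ξ i|) (fun i _ => abs_nonneg _)
    calc Real.sqrt (∑ i : Fin (d+1), ‖ξ i‖^2) ≤ Real.sqrt ((∑ i : Fin (d+1), |ξ i|)^2) :=
          Real.sqrt_le_sqrt h1
      _ = ∑ i : Fin (d+1), |ξ i| :=
          Real.sqrt_sq (Finset.sum_nonneg fun i _ => abs_nonneg _)
  set m₁ : Fin (d+1) := ⟨1, by omega⟩ with hm₁
  have hm₁0 : m₁ ≠ 0 := by
    rw [hm₁]
    simp [Fin.ext_iff]
  have hBm₁ : B m₁ = M := by simp [hBdef, myB, hm₁0]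
  have hPsplit : (2:ℝ) ^ (ε * (j:ℝ) * (d:ℝ) / 2) * (2:ℝ) ^ (ε * (j:ℝ))
      = (2:ℝ) ^ ((j:ℝ) * ((d:ℝ) + 2) * ε / 2) := by
    rw [← Real.rpow_add (by norm_num : (0:ℝ) < 2)]
    congr 1
    ring
  constructor
  · -- lower bound
    calc ENNReal.ofReal (c * (2:ℝ) ^ ((j:ℝ) * ((d:ℝ)+2) * ε / 2))
        = ∫⁻ ξ : EuclideanSpace ℝ (Fin (d+1)), ENNReal.ofReal
            (|ξ m₁| * ‖VectorFourier.fourierIntegral Real.fourierChar volume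
                (innerₗ (EuclideanSpace ℝ (Fin (d + 1)))) (fun x => (chiTilde d j ε y x : ℂ)) ξ‖) := by
          rw [key m₁, hBm₁, hL, hPsplit]
      _ ≤ ∫⁻ ξ : EuclideanSpace ℝ (Fin (d+1)), ENNReal.ofReal
            (‖ξ‖ * ‖VectorFourier.fourierIntegral Real.fourierChar volume
                (innerₗ (EuclideanSpace ℝ (Fin (d + 1)))) (fun x => (chiTilde d j ε y x : ℂ)) ξ‖) := by
          refine lintegral_mono fun ξ => ENNReal.ofReal_le_ofReal ?_
          exact mul_le_mul_of_nonneg_right (hcoord m₁ ξ) (norm_nonneg _)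
  · -- upper bound
    have hmeas : ∀ m : Fin (d+1), Measurable (fun ξ : EuclideanSpace ℝ (Fin (d+1)) =>
        ENNReal.ofReal
          (|ξ m| * ‖VectorFourier.fourierIntegral Real.fourierChar volume
                (innerₗ (EuclideanSpace ℝ (Fin (d + 1)))) (fun x => (chiTilde d j ε y x : ℂ)) ξ‖)) := by
      intro m
      simp only [hptm]
      have hgm : ∀ i, Measurable (g m i) := by
        intro i
        simp only [hg]
        apply Measurable.mul
        · by_cases h : i = m
          · simpa [h] using measurable_id.abs
          · simp only [h, if_false]
            exact measurable_const
        · exact (Real.measurable_exp.comp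
            ((measurable_id.pow_const 2).const_mul (-(2*π^2 / B i)))).const_mul _
      have hcoordmeas : ∀ i' : Fin (d+1),
          Measurable (fun ξ : EuclideanSpace ℝ (Fin (d+1)) => ξ i') := fun i' =>
        (measurable_pi_apply i').comp (MeasurableEquiv.toLp 2 (Fin (d+1) → ℝ)).symm.measurable
      apply ENNReal.measurable_ofReal.comp
      apply Measurable.const_mul
      exact Finset.measurable_prod Finset.univ fun i _ => (hgm i).comp (hcoordmeas i)
    calc (∫⁻ ξ : EuclideanSpace ℝ (Fin (d+1)), ENNReal.ofReal
            (‖ξ‖ * ‖VectorFourier.fourierIntegral Real.fourierChar volume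
                (innerₗ (EuclideanSpace ℝ (Fin (d + 1)))) (fun x => (chiTilde d j ε y x : ℂ)) ξ‖))
        ≤ ∫⁻ ξ : EuclideanSpace ℝ (Fin (d+1)), ∑ m : Fin (d+1), ENNReal.ofReal
            (|ξ m| * ‖VectorFourier.fourierIntegral Real.fourierChar volume
                (innerₗ (EuclideanSpace ℝ (Fin (d + 1)))) (fun x => (chiTilde d j ε y x : ℂ)) ξ‖) := by
          refine lintegral_mono fun ξ => ?_
          rw [← ENNReal.ofReal_sum_of_nonneg
            (fun m _ => mul_nonneg (abs_nonneg _) (norm_nonneg _))]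
          refine ENNReal.ofReal_le_ofReal ?_
          rw [← Finset.sum_mul]
          exact mul_le_mul_of_nonneg_right (hnormle ξ) (norm_nonneg _)
      _ = ∑ m : Fin (d+1), ∫⁻ ξ : EuclideanSpace ℝ (Fin (d+1)), ENNReal.ofReal
            (|ξ m| * ‖VectorFourier.fourierIntegral Real.fourierChar volume
                (innerₗ (EuclideanSpace ℝ (Fin (d + 1)))) (fun x => (chiTilde d j ε y x : ℂ)) ξ‖) :=
          lintegral_finset_sum _ (fun m _ => hmeas m)
      _ ≤ ∑ _m : Fin (d+1),
            ENNReal.ofReal (c * (2:ℝ) ^ ((j:ℝ) * ((d:ℝ)+2) * ε / 2)) := by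
          refine Finset.sum_le_sum fun m _ => ?_
          rw [key m]
          refine ENNReal.ofReal_le_ofReal ?_
          have h1 : Real.sqrt (B m) ≤ (2:ℝ) ^ (ε * (j:ℝ)) := by
            rw [← hL]; exact Real.sqrt_le_sqrt (hBle m)
          calc c * ((2:ℝ) ^ (ε * (j:ℝ) * (d:ℝ) / 2) * Real.sqrt (B m))
              ≤ c * ((2:ℝ) ^ (ε * (j:ℝ) * (d:ℝ) / 2) * (2:ℝ) ^ (ε * (j:ℝ))) := by
                refine mul_le_mul_of_nonneg_left ?_ hcpos.le
                exact mul_le_mul_of_nonneg_left h1 (by positivity)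
            _ = c * (2:ℝ) ^ ((j:ℝ) * ((d:ℝ)+2) * ε / 2) := by rw [hPsplit]
      _ = ENNReal.ofReal (((d:ℝ)+1) * c * (2:ℝ) ^ ((j:ℝ) * ((d:ℝ)+2) * ε / 2)) := by
          rw [Finset.sum_const, Finset.card_univ, Fintype.card_fin, nsmul_eq_mul]
          rw [← ENNReal.ofReal_natCast (d+1), ← ENNReal.ofReal_mul (by positivity)]
          congr 1
          push_cast
          ring
end

section
/- Let D ≥ 2 and F ≥ 0. There is a constant c = c(F) > 0 such that for every unit vector (ξ_0, ξ) ∈ S^{D−1} ⊂ ℝ × ℝ^{D−1}, every v ∈ ℝ^{D−1} with |v| ≤ F, and every δ ∈ (0,1]: (ξ_0 + v·ξ)² + δ|ξ|² ≥ c δ. -/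
open MeasureTheory RealInnerProductSpace

/-- For `F ≥ 0` there is a constant `c = c(F) > 0` such that for every
dimension `D = d + 1 ≥ 2`, every unit vector `(ξ₀, ξ) ∈ 𝕊^{D-1} ⊂ ℝ × ℝ^{D-1}`, every
`v ∈ ℝ^{D-1}` with `|v| ≤ F`, and every `δ ∈ (0,1]`, one has
`(ξ₀ + v·ξ)² + δ|ξ|² ≥ c δ`. -/
theorem stmt8 (F : ℝ) (hF : 0 ≤ F) :
    ∃ c : ℝ, 0 < c ∧
      ∀ (d : ℕ), 1 ≤ d →
        ∀ (ξ₀ : ℝ) (ξ v : EuclideanSpace ℝ (Fin d)),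
          ξ₀ ^ 2 + ‖ξ‖ ^ 2 = 1 → ‖v‖ ≤ F →
            ∀ δ : ℝ, 0 < δ → δ ≤ 1 →
              c * δ ≤ (ξ₀ + ∑ k, v k * ξ k) ^ 2 + δ * ‖ξ‖ ^ 2 := by
  have hden : (0:ℝ) < 3 + 2 * F ^ 2 := by positivity
  refine ⟨1 / (3 + 2 * F ^ 2), by positivity, ?_⟩
  intro d hd ξ₀ ξ v hunit hv δ hδ hδ1
  set s : ℝ := ∑ k, v k * ξ k with hs
  have hinner : s = ⟪v, ξ⟫ := by
    simp [hs, PiLp.inner_apply, RCLike.inner_apply, mul_comm]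
  have habs : |s| ≤ ‖v‖ * ‖ξ‖ := by
    rw [hinner]; exact abs_real_inner_le_norm v ξ
  have hξn : (0:ℝ) ≤ ‖ξ‖ := norm_nonneg ξ
  have habs2 : |s| ≤ F * ‖ξ‖ := habs.trans (by nlinarith)
  have hs2 : s ^ 2 ≤ F ^ 2 * ‖ξ‖ ^ 2 := by
    nlinarith [abs_nonneg s, sq_abs s]
  rcases le_or_gt (1 / (3 + 2 * F ^ 2)) (‖ξ‖ ^ 2) with h | h
  · nlinarith [sq_nonneg (ξ₀ + s)]
  · have key : ξ₀ ^ 2 - 2 * s ^ 2 ≤ 2 * (ξ₀ + s) ^ 2 := by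
      nlinarith [sq_nonneg (ξ₀ + 2 * s)]
    have h1 : (3 + 2 * F ^ 2) * ‖ξ‖ ^ 2 < 1 := by
      have := (mul_lt_mul_of_pos_left h hden)
      rwa [mul_one_div_cancel hden.ne'] at this
    have h2 : (1 + 2 * F ^ 2) * ((3 + 2 * F ^ 2) * ‖ξ‖ ^ 2) ≤ (1 + 2 * F ^ 2) * 1 := by
      apply mul_le_mul_of_nonneg_left h1.le (by positivity)
    have h3 : ξ₀ ^ 2 - 2 * s ^ 2 ≥ 1 - (1 + 2 * F ^ 2) * ‖ξ‖ ^ 2 := by nlinarith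
    rw [div_mul_eq_mul_div, one_mul, div_le_iff₀ hden]
    have h4 : 2 ≤ (2 * (ξ₀ + s) ^ 2) * (3 + 2 * F ^ 2) := by nlinarith
    nlinarith [mul_nonneg (mul_nonneg hδ.le (sq_nonneg ‖ξ‖)) hden.le]
end

section
/- Let m ≥ 1, let L ⊆ ℝ^m be a measurable set of finite Lebesgue measure, let g : L → ℝ be measurable, and let α > 0. Assume the non-degeneracy bound Leb{λ ∈ L : |g(λ)| < ν} ≤ ν^α for every ν > 0. Then for every δ > 0, every b ∈ (0,1], and every μ > 0: ( ∫_L ( δ b / (g(λ)² + δ b) )² dλ )^{1/2} ≤ μ^{α/2} + (δ/μ²) · Leb(L)^{1/2}. -/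
open MeasureTheory

lemma sqrt_add_le' {x y : ℝ} (hx : 0 ≤ x) (hy : 0 ≤ y) :
    Real.sqrt (x + y) ≤ Real.sqrt x + Real.sqrt y := by
  nlinarith [Real.sq_sqrt hx, Real.sq_sqrt hy, Real.sq_sqrt (add_nonneg hx hy),
    Real.sqrt_nonneg x, Real.sqrt_nonneg y, Real.sqrt_nonneg (x + y),
    mul_nonneg (Real.sqrt_nonneg x) (Real.sqrt_nonneg y)]

/-- Let `L ⊆ ℝ^m` be a measurable set of finite Lebesgue measure,
`g : L → ℝ` measurable, and `α > 0` with the non-degeneracy bound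
`Leb {λ ∈ L | |g λ| < ν} ≤ ν^α` for all `ν > 0`. Then for all `δ > 0`, `b ∈ (0,1]`,
`μ > 0`:
`(∫_L (δ b / (g(λ)² + δ b))² dλ)^{1/2} ≤ μ^{α/2} + (δ/μ²)·Leb(L)^{1/2}`. -/
theorem stmt9 (m : ℕ) (hm : 1 ≤ m)
    (L : Set (EuclideanSpace ℝ (Fin m))) (hLmeas : MeasurableSet L)
    (hLfin : volume L < ⊤)
    (g : EuclideanSpace ℝ (Fin m) → ℝ) (hg : Measurable g)
    (α : ℝ) (hα : 0 < α)
    (hnd : ∀ ν : ℝ, 0 < ν →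
      volume {lam ∈ L | |g lam| < ν} ≤ ENNReal.ofReal (ν ^ α)) :
    ∀ δ : ℝ, 0 < δ → ∀ b : ℝ, 0 < b → b ≤ 1 → ∀ μ : ℝ, 0 < μ →
      (∫ lam in L, (δ * b / (g lam ^ 2 + δ * b)) ^ 2) ^ ((1 : ℝ) / 2) ≤
        μ ^ (α / 2) + δ / μ ^ 2 * (volume L).toReal ^ ((1 : ℝ) / 2) := by
  intro δ hδ b hb hb1 μ hμ
  have hcpos : 0 < δ * b := mul_pos hδ hb
  set c : ℝ := δ * b with hc
  set f : EuclideanSpace ℝ (Fin m) → ℝ := fun lam => (c / (g lam ^ 2 + c)) ^ 2 with hf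
  set S : Set (EuclideanSpace ℝ (Fin m)) := {lam ∈ L | |g lam| < μ} with hS
  have hSsub : S ⊆ L := fun x hx => hx.1
  have hSmeas : MeasurableSet S := hLmeas.inter (hg.abs measurableSet_Iio)
  have hfmeas : Measurable f :=
    (measurable_const.div ((hg.pow_const 2).add_const c)).pow_const 2
  have hden : ∀ lam, 0 < g lam ^ 2 + c := fun lam => by positivity
  have hf01 : ∀ lam, 0 ≤ f lam ∧ f lam ≤ 1 := by
    intro lam
    have h1 : c / (g lam ^ 2 + c) ≤ 1 := by
      rw [div_le_one (hden lam)]; nlinarith [sq_nonneg (g lam)]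
    have h0 : 0 ≤ c / (g lam ^ 2 + c) := le_of_lt (div_pos hcpos (hden lam))
    exact ⟨by positivity, pow_le_one₀ h0 h1⟩
  have hK : (0:ℝ) ≤ (δ / μ ^ 2) ^ 2 := by positivity
  have : IsFiniteMeasure (volume.restrict L) :=
    ⟨by rwa [Measure.restrict_apply_univ]⟩
  -- pointwise bound on L
  have hbd : ∀ lam ∈ L,
      f lam ≤ S.indicator (fun _ => (1:ℝ)) lam + (δ / μ ^ 2) ^ 2 := by
    intro lam hlam
    by_cases h : |g lam| < μ
    · have hmem : lam ∈ S := ⟨hlam, h⟩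
      rw [Set.indicator_of_mem hmem]
      exact le_add_of_le_of_nonneg (hf01 lam).2 hK
    · push_neg at h
      have hg2 : μ ^ 2 ≤ g lam ^ 2 := by
        have := sq_abs (g lam); nlinarith [abs_nonneg (g lam)]
      have h1 : c / (g lam ^ 2 + c) ≤ δ / μ ^ 2 := by
        apply div_le_div₀ (le_of_lt hδ) _ (by positivity) _
        · calc c = δ * b := rfl
            _ ≤ δ * 1 := by nlinarith
            _ = δ := mul_one δ
        · nlinarith
      have h0 : 0 ≤ c / (g lam ^ 2 + c) := le_of_lt (div_pos hcpos (hden lam))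
      have : f lam ≤ (δ / μ ^ 2) ^ 2 := pow_le_pow_left₀ h0 h1 2
      exact le_add_of_nonneg_of_le (Set.indicator_nonneg (fun _ _ => zero_le_one) lam) this
  -- integrability
  have hfint : IntegrableOn f L := by
    apply Measure.integrableOn_of_bounded hLfin.ne hfmeas.aestronglyMeasurable
    filter_upwards with lam
    rw [Real.norm_eq_abs, abs_of_nonneg (hf01 lam).1]
    exact (hf01 lam).2
  have hgint : IntegrableOn (fun lam => S.indicator (fun _ => (1:ℝ)) lam + (δ / μ ^ 2) ^ 2) L := by
    apply Integrable.add _ (integrable_const _)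
    apply Measure.integrableOn_of_bounded (M := 1) hLfin.ne
      ((measurable_const.indicator hSmeas).aestronglyMeasurable)
    filter_upwards with lam
    rw [Real.norm_eq_abs,
      abs_of_nonneg (Set.indicator_nonneg (fun _ _ => zero_le_one) lam)]
    by_cases h : lam ∈ S <;> simp [Set.indicator, h]
  -- key integral bound
  have hμα : 0 ≤ μ ^ α := Real.rpow_nonneg hμ.le α
  have key : (∫ lam in L, f lam) ≤ μ ^ α + (δ / μ ^ 2) ^ 2 * (volume L).toReal := by
    have h1 : (∫ lam in L, f lam) ≤
        ∫ lam in L, (S.indicator (fun _ => (1:ℝ)) lam + (δ / μ ^ 2) ^ 2) :=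
      setIntegral_mono_on hfint hgint hLmeas hbd
    have h2 : (∫ lam in L, (S.indicator (fun _ => (1:ℝ)) lam + (δ / μ ^ 2) ^ 2)) =
        (volume S).toReal + (δ / μ ^ 2) ^ 2 * (volume L).toReal := by
      rw [integral_add _ (integrable_const _)]
      · rw [integral_indicator_const _ hSmeas, integral_const]
        rw [measureReal_def, measureReal_def]
        rw [Measure.restrict_apply hSmeas, Set.inter_eq_self_of_subset_left hSsub]
        simp [mul_comm]
      · apply Measure.integrableOn_of_bounded (M := 1) hLfin.ne
          ((measurable_const.indicator hSmeas).aestronglyMeasurable)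
        filter_upwards with lam
        by_cases h : lam ∈ S <;> simp [Set.indicator, h]
    have h3 : (volume S).toReal ≤ μ ^ α := by
      have := hnd μ hμ
      calc (volume S).toReal ≤ (ENNReal.ofReal (μ ^ α)).toReal :=
            ENNReal.toReal_mono (by simp) this
        _ = μ ^ α := ENNReal.toReal_ofReal hμα
    linarith [h1, h2 ▸ h1]
  -- conclude
  have hInn : 0 ≤ ∫ lam in L, f lam :=
    integral_nonneg (fun lam => (hf01 lam).1)
  have hvol : (0:ℝ) ≤ (volume L).toReal := ENNReal.toReal_nonneg
  calc (∫ lam in L, (δ * b / (g lam ^ 2 + δ * b)) ^ 2) ^ ((1:ℝ)/2)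
      = Real.sqrt (∫ lam in L, f lam) := by
        rw [Real.sqrt_eq_rpow]
    _ ≤ Real.sqrt (μ ^ α + (δ / μ ^ 2) ^ 2 * (volume L).toReal) :=
        Real.sqrt_le_sqrt key
    _ ≤ Real.sqrt (μ ^ α) + Real.sqrt ((δ / μ ^ 2) ^ 2 * (volume L).toReal) :=
        sqrt_add_le' hμα (by positivity)
    _ = μ ^ (α / 2) + δ / μ ^ 2 * (volume L).toReal ^ ((1:ℝ)/2) := by
        rw [Real.sqrt_eq_rpow, Real.sqrt_eq_rpow, ← Real.rpow_natCast (δ / μ ^ 2) 2,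
          Real.mul_rpow (by positivity) hvol, ← Real.rpow_mul hμ.le,
          ← Real.rpow_mul (by positivity), mul_one_div]
        norm_num
end
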